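/- (Example 3.4, deformation to all orders.) Let q ∈ ℂ be nonzero and not a root of unity. For i ≥ 1 let Ψ^{(i)} : A_q⊗B → B⊗A_q be the ℂ-linear map determined by Ψ^{(i)}(a^kā^l ⊗ b^r) = q^{lr}·[k]_q[k−1]_q⋯[k−i+1]_q·binom(r+i−1, i)_q·b^{r+i}⊗a^{k−i}ā^{l+i} for i ≤ k and Ψ^{(i)}(a^kā^l ⊗ b^r) = 0 for i > k, and set Ψ^{(0)} = Ψ_0. Then for every m ≥ 1: Ψ^{(m)}∘(μ_{A_q}⊗id_B) = Σ_{i+j=m, i,j≥0} (id_B⊗μ_{A_q})∘(Ψ^{(i)}⊗id_{A_q})∘(id_{A_q}⊗Ψ^{(j)}) and Ψ^{(m)}∘(id_{A_q}⊗μ_B) = Σ_{i+j=m, i,j≥0} (μ_B⊗id_{A_q})∘(id_B⊗Ψ^{(i)})∘(Ψ^{(j)}⊗id_B); that is, all obstructions vanish and Ψ_t = Σ_i t^iΨ^{(i)} defines a deformation of the factorisation to all orders in t. -/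

import Mathlib

/-!
STATEMENT 12 (Example 3.4, deformation to all orders): the maps
`Ψ⁽ⁱ⁾(a^k ā^l ⊗ b^r) = q^{lr}·[k][k−1]⋯[k−i+1]·binom(r+i−1, i)_q·b^{r+i} ⊗ a^{k−i} ā^{l+i}`
(zero when `i > k`) extend the infinitesimal deformation to all orders:
all obstructions vanish, i.e. for every `m ≥ 1`,
`Ψ⁽ᵐ⁾∘(μ_A⊗id) = Σ_{i+j=m}(id⊗μ_A)∘(Ψ⁽ⁱ⁾⊗id)∘(id⊗Ψ⁽ʲ⁾)` and
`Ψ⁽ᵐ⁾∘(id⊗μ_B) = Σ_{i+j=m}(μ_B⊗id)∘(id⊗Ψ⁽ⁱ⁾)∘(Ψ⁽ʲ⁾⊗id)`,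
so `Ψ_t = Σ_i t^i Ψ⁽ⁱ⁾` is a deformation of the factorisation to all orders.
-/
open TensorProduct

section Defs

variable {k : Type*} [CommRing k]
variable {A B : Type*} [AddCommGroup A] [Module k A] [AddCommGroup B] [Module k B]

/-- `(id_B ⊗ μ) ∘ (ψ ⊗ id_A)` as a map `A ⊗ (B ⊗ A) → B ⊗ A`. -/
noncomputable def twL (μ : A ⊗[k] A →ₗ[k] A) (ψ : A ⊗[k] B →ₗ[k] B ⊗[k] A) :
    A ⊗[k] (B ⊗[k] A) →ₗ[k] B ⊗[k] A :=
  LinearMap.lTensor B μ ∘ₗ (TensorProduct.assoc k B A A).toLinearMap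
    ∘ₗ LinearMap.rTensor A ψ ∘ₗ (TensorProduct.assoc k A B A).symm.toLinearMap

/-- `(ν ⊗ id_A) ∘ (id_B ⊗ ψ)` as a map `(B ⊗ A) ⊗ B → B ⊗ A`. -/
noncomputable def twR (ν : B ⊗[k] B →ₗ[k] B) (ψ : A ⊗[k] B →ₗ[k] B ⊗[k] A) :
    (B ⊗[k] A) ⊗[k] B →ₗ[k] B ⊗[k] A :=
  LinearMap.rTensor A ν ∘ₗ (TensorProduct.assoc k B B A).symm.toLinearMap
    ∘ₗ LinearMap.lTensor B ψ ∘ₗ (TensorProduct.assoc k B A B).toLinearMap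

end Defs

/-- The underlying module of the algebra `A_q`: the free `ℂ`-module with basis
`{a^k ā^l : (k,l) ∈ ℕ × ℕ}`, a basis element being `Finsupp.single (k,l) 1`. -/
abbrev Aq : Type := (ℕ × ℕ) →₀ ℂ

/-- `B = ℂ[b]`, the polynomial algebra, with basis `{b^r = Finsupp.single r 1}`. -/
abbrev Bpoly : Type := AddMonoidAlgebra ℂ ℕ

/-- The multiplication of `A_q`: `(a^k ā^l)·(a^r ā^s) = q^{lr}·a^{k+r} ā^{l+s}`,
as a bilinear map. -/
noncomputable def muq (q : ℂ) : Aq →ₗ[ℂ] Aq →ₗ[ℂ] Aq :=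
  Finsupp.lift (Aq →ₗ[ℂ] Aq) ℂ (ℕ × ℕ) fun p =>
    Finsupp.lift Aq ℂ (ℕ × ℕ) fun p' =>
      (q ^ (p.2 * p'.1)) • Finsupp.single (p.1 + p'.1, p.2 + p'.2) (1 : ℂ)

/-- The map `Ψ₀ : A_q ⊗ B → B ⊗ A_q`, `a^k ā^l ⊗ b^r ↦ q^{lr}·b^r ⊗ a^k ā^l`. -/
noncomputable def psiq0 (q : ℂ) : Aq ⊗[ℂ] Bpoly →ₗ[ℂ] Bpoly ⊗[ℂ] Aq :=
  TensorProduct.lift <|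
    Finsupp.lift (Bpoly →ₗ[ℂ] Bpoly ⊗[ℂ] Aq) ℂ (ℕ × ℕ) fun p =>
      Finsupp.lift (Bpoly ⊗[ℂ] Aq) ℂ ℕ (fun r =>
        (q ^ (p.2 * r)) •
          ((AddMonoidAlgebra.single r (1 : ℂ) : Bpoly) ⊗ₜ[ℂ] (Finsupp.single p (1 : ℂ) : Aq)))
          ∘ₗ (AddMonoidAlgebra.coeffLinearEquiv ℂ).toLinearMap


/-- The `q`-integer `[m]_q = 1 + q + ⋯ + q^{m−1}`. -/
noncomputable def qint (q : ℂ) (m : ℕ) : ℂ := ∑ i ∈ Finset.range m, q ^ i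

/-- The Gaussian (`q`-)binomial coefficient `binom(m, i)_q` (the value at `q`
of the Gaussian binomial polynomial), via the `q`-Pascal recursion
`binom(m+1, i+1)_q = binom(m, i)_q + q^{i+1}·binom(m, i+1)_q`. -/
noncomputable def qbinom (q : ℂ) : ℕ → ℕ → ℂ
  | _, 0 => 1
  | 0, _ + 1 => 0
  | m + 1, i + 1 => qbinom q m i + q ^ (i + 1) * qbinom q m (i + 1)

/-- The family `Ψ⁽ⁱ⁾ : A_q ⊗ B → B ⊗ A_q`; `Ψ⁽⁰⁾ = Ψ₀` and for `i ≥ 1`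
`Ψ⁽ⁱ⁾(a^k ā^l ⊗ b^r) = q^{lr}·[k][k−1]⋯[k−i+1]·binom(r+i−1, i)_q·b^{r+i} ⊗ a^{k−i} ā^{l+i}`
(the coefficient `[k][k−1]⋯[k−i+1] = ∏_{j<i}[k−j]_q` vanishes when `i > k`). -/
noncomputable def psiqFam (q : ℂ) : ℕ → (Aq ⊗[ℂ] Bpoly →ₗ[ℂ] Bpoly ⊗[ℂ] Aq)
  | 0 => psiq0 q
  | i + 1 =>
    TensorProduct.lift <|
      Finsupp.lift (Bpoly →ₗ[ℂ] Bpoly ⊗[ℂ] Aq) ℂ (ℕ × ℕ) fun p =>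
        Finsupp.lift (Bpoly ⊗[ℂ] Aq) ℂ ℕ (fun r =>
          (q ^ (p.2 * r) * (∏ j ∈ Finset.range (i + 1), qint q (p.1 - j))
              * qbinom q (r + i) (i + 1)) •
            ((AddMonoidAlgebra.single (r + (i + 1)) (1 : ℂ) : Bpoly)
              ⊗ₜ[ℂ] (Finsupp.single (p.1 - (i + 1), p.2 + (i + 1)) (1 : ℂ) : Aq)))
            ∘ₗ (AddMonoidAlgebra.coeffLinearEquiv ℂ).toLinearMap

namespace QPaux

noncomputable def H (q x : ℂ) (i : ℕ) : ℂ := ∏ t ∈ Finset.range i, (x * q ^ t - 1)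

@[simp] lemma H_zero (q x : ℂ) : H q x 0 = 1 := by simp [H]

lemma H_succ (q x : ℂ) (i : ℕ) : H q x (i+1) = H q x i * (x * q ^ i - 1) := by
  simp [H, Finset.prod_range_succ]

lemma H_add (q x : ℂ) (a b : ℕ) : H q x (a + b) = H q x a * H q (x * q ^ a) b := by
  simp only [H, Finset.prod_range_add]
  congr 1
  refine Finset.prod_congr rfl fun t _ => ?_
  rw [pow_add, mul_assoc]

lemma H_eq_zero (q x : ℂ) {t i : ℕ} (ht : t < i) (hx : x * q ^ t = 1) : H q x i = 0 := by
  refine Finset.prod_eq_zero (Finset.mem_range.2 ht) ?_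
  rw [hx]; ring

@[simp] lemma qbinom_zero_right (q : ℂ) (n : ℕ) : qbinom q n 0 = 1 := by
  cases n <;> rfl

lemma qbinom_succ (q : ℂ) (m i : ℕ) :
    qbinom q (m+1) (i+1) = qbinom q m i + q ^ (i + 1) * qbinom q m (i + 1) := rfl

lemma qbinom_eq_zero (q : ℂ) : ∀ {n i : ℕ}, n < i → qbinom q n i = 0 := by
  intro n
  induction n with
  | zero => intro i hi; obtain ⟨j, rfl⟩ := Nat.exists_eq_add_of_lt hi; rfl
  | succ n ih =>
    intro i hi
    obtain ⟨j, rfl⟩ : ∃ j, i = j + 1 := ⟨i - 1, by omega⟩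
    rw [qbinom_succ, ih (by omega), ih (by omega)]
    ring

lemma qbinom_self (q : ℂ) (n : ℕ) : qbinom q n n = 1 := by
  induction n with
  | zero => rfl
  | succ n ih => rw [qbinom_succ, ih, qbinom_eq_zero q (by omega)]; ring

/-- factorial formula, division-free -/
lemma qbinom_fact (q : ℂ) : ∀ n i : ℕ, i ≤ n →
    qbinom q n i * H q q i * H q q (n - i) = H q q n := by
  intro n
  induction n with
  | zero => intro i hi; interval_cases i; simp
  | succ n ih =>
    intro i hi
    rcases i with _ | j
    · simp
    rcases Nat.lt_or_ge j n with hj | hj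
    · have h1 := ih j (by omega)
      have h2 := ih (j+1) (by omega)
      obtain ⟨e, he⟩ : ∃ e, n = j + 1 + e := ⟨n - (j+1), by omega⟩
      subst he
      rw [qbinom_succ]
      have e1 : j + 1 + e + 1 - (j + 1) = e + 1 := by omega
      have e2 : j + 1 + e - j = e + 1 := by omega
      have e3 : j + 1 + e - (j + 1) = e := by omega
      rw [e1]
      rw [e2] at h1
      rw [e3] at h2
      rw [H_succ q q (j+1+e), H_succ q q e, H_succ q q j] at *
      linear_combination (q*q^j - 1) * h1 + q^(j+1) * (q*q^e - 1) * h2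
    · have : j = n := by omega
      subst this
      rw [qbinom_succ, qbinom_self, qbinom_eq_zero q (by omega : j < j+1)]
      simp

/-- q-Vandermonde, "g"-version: `c*d = 1`, Pascal in `c`, products in `d`. -/
lemma vand_g (c d : ℂ) (hcd : c * d = 1) (x y : ℂ) : ∀ m : ℕ,
    ∑ i ∈ Finset.range (m+1),
      qbinom c m i * y ^ i * d ^ (i * (m - i)) * H d x i * H d y (m - i)
      = H d (x * y) m := by
  intro m
  induction m with
  | zero => simp
  | succ m ih =>
    set t : ℕ → ℂ := fun i =>
      qbinom c m i * y ^ i * d ^ (i * (m - i)) * H d x i * H d y (m - i) with ht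
    set G : ℕ → ℂ := fun i =>
      c ^ i * qbinom c m i * y ^ i * d ^ (i * (m + 1 - i)) * H d x i * H d y (m + 1 - i) with hG
    set F : ℕ → ℂ := fun i =>
      qbinom c (m+1) i * y ^ i * d ^ (i * (m + 1 - i)) * H d x i * H d y (m + 1 - i) with hF
    have key : ∀ i ∈ Finset.range (m+1),
        F (i+1) = t i * (x * y * d ^ m - 1) + (G (i+1) - G i) := by
      intro i hi
      rw [Finset.mem_range] at hi
      obtain ⟨j, rfl⟩ : ∃ j, m = i + j := ⟨m - i, by omega⟩
      simp only [hF, hG, ht]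
      have e1 : i + j + 1 - (i + 1) = j := by omega
      have e2 : i + j - i = j := by omega
      have e3 : i + j + 1 - i = j + 1 := by omega
      rw [e1, e2, e3, qbinom_succ, H_succ d x i, H_succ d y j]
      have hpow : c ^ i * d ^ i = 1 := by rw [← mul_pow, hcd, one_pow]
      linear_combination (qbinom c (i+j) i * y^i * d^(i*j) * H d x i * H d y j
        * (y * d^j - 1)) * hpow
    calc ∑ i ∈ Finset.range (m+2), F i
        = ∑ i ∈ Finset.range (m+1), F (i+1) + F 0 := Finset.sum_range_succ' F (m+1)
      _ = ∑ i ∈ Finset.range (m+1), (t i * (x * y * d ^ m - 1) + (G (i+1) - G i)) + G 0 := by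
          rw [Finset.sum_congr rfl key]
          congr 1
          simp [hF, hG]
      _ = (∑ i ∈ Finset.range (m+1), t i) * (x * y * d ^ m - 1)
            + ((∑ i ∈ Finset.range (m+1), (G (i+1) - G i)) + G 0) := by
          rw [Finset.sum_add_distrib, ← Finset.sum_mul]; ring
      _ = H d (x * y) m * (x * y * d ^ m - 1) + G (m+1) := by
          rw [ih, Finset.sum_range_sub G]; ring
      _ = H d (x * y) (m+1) := by
          have : qbinom c m (m+1) = 0 := qbinom_eq_zero c (by omega)
          simp only [hG, this, H_succ]
          ring

/-- q-Vandermonde, "h"-version. -/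
lemma vand_h (c x y : ℂ) : ∀ m : ℕ,
    ∑ i ∈ Finset.range (m+1),
      qbinom c m i * y ^ (m - i) * H c y i * H c x (m - i)
      = H c (x * y) m := by
  intro m
  induction m with
  | zero => simp
  | succ m ih =>
    set t : ℕ → ℂ := fun i =>
      qbinom c m i * y ^ (m - i) * H c y i * H c x (m - i) with ht
    set G : ℕ → ℂ := fun i =>
      c ^ i * qbinom c m i * y ^ (m + 1 - i) * H c y i * H c x (m + 1 - i) with hG
    set F : ℕ → ℂ := fun i =>
      qbinom c (m+1) i * y ^ (m + 1 - i) * H c y i * H c x (m + 1 - i) with hF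
    have key : ∀ i ∈ Finset.range (m+1),
        F (i+1) = t i * (x * y * c ^ m - 1) + (G (i+1) - G i) := by
      intro i hi
      rw [Finset.mem_range] at hi
      obtain ⟨j, rfl⟩ : ∃ j, m = i + j := ⟨m - i, by omega⟩
      simp only [hF, hG, ht]
      have e1 : i + j + 1 - (i + 1) = j := by omega
      have e2 : i + j - i = j := by omega
      have e3 : i + j + 1 - i = j + 1 := by omega
      rw [e1, e2, e3, qbinom_succ, H_succ c y i, H_succ c x j]
      ring
    calc ∑ i ∈ Finset.range (m+2), F i
        = ∑ i ∈ Finset.range (m+1), F (i+1) + F 0 := Finset.sum_range_succ' F (m+1)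
      _ = ∑ i ∈ Finset.range (m+1), (t i * (x * y * c ^ m - 1) + (G (i+1) - G i)) + G 0 := by
          rw [Finset.sum_congr rfl key]
          congr 1
          simp [hF, hG]
      _ = (∑ i ∈ Finset.range (m+1), t i) * (x * y * c ^ m - 1)
            + ((∑ i ∈ Finset.range (m+1), (G (i+1) - G i)) + G 0) := by
          rw [Finset.sum_add_distrib, ← Finset.sum_mul]; ring
      _ = H c (x * y) m * (x * y * c ^ m - 1) + G (m+1) := by
          rw [ih, Finset.sum_range_sub G]; ring
      _ = H c (x * y) (m+1) := by
          have : qbinom c m (m+1) = 0 := qbinom_eq_zero c (by omega)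
          simp only [hG, this, H_succ]
          ring


lemma qint_mul (q : ℂ) (n : ℕ) : qint q n * (q - 1) = q ^ n - 1 := geom_sum_mul q n

@[simp] lemma qint_zero (q : ℂ) : qint q 0 = 0 := by simp [qint]

section Closed
set_option linter.unusedSectionVars false

variable {q : ℂ} (hq : q ≠ 0) (hroot : ∀ m : ℕ, 1 ≤ m → q ^ m ≠ 1)

include hroot in
lemma E_ne : q - 1 ≠ 0 := by
  have := hroot 1 le_rfl
  rw [pow_one] at this
  exact sub_ne_zero.2 this

include hroot in
lemma F_ne (n : ℕ) : H q q n ≠ 0 := by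
  rw [H, Finset.prod_ne_zero_iff]
  intro t _
  have : q * q ^ t = q ^ (t+1) := by ring
  rw [this]
  exact sub_ne_zero.2 (hroot (t+1) (by omega))

include hq in
lemma G_eq_zero {k i : ℕ} (h : k < i) : H q⁻¹ ((q : ℂ) ^ k) i = 0 := by
  refine H_eq_zero _ _ h ?_
  rw [inv_pow, mul_inv_cancel₀ (pow_ne_zero _ hq)]

include hq in
lemma Pk_eq (i k : ℕ) :
    (∏ j ∈ Finset.range i, qint q (k - j)) * (q - 1) ^ i = H q⁻¹ (q ^ k) i := by
  rcases le_or_gt i k with h | h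
  · have hc : (q - 1) ^ i = ∏ _j ∈ Finset.range i, (q - 1) := by
      rw [Finset.prod_const, Finset.card_range]
    rw [hc, ← Finset.prod_mul_distrib, H]
    refine Finset.prod_congr rfl fun j hj => ?_
    rw [Finset.mem_range] at hj
    rw [qint_mul]
    congr 1
    rw [inv_pow, eq_comm, mul_inv_eq_iff_eq_mul₀ (pow_ne_zero _ hq), ← pow_add]
    congr 1
    omega
  · rw [Finset.prod_eq_zero (Finset.mem_range.2 h) (by simp), zero_mul,
      G_eq_zero hq h]

include hq hroot in
lemma Qb_eq (i r : ℕ) : qbinom q (r + i - 1) i * H q q i = H q (q ^ r) i := by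
  rcases r with _ | s
  · rcases i with _ | i
    · simp
    · rw [show (0 : ℕ) + (i+1) - 1 = i from by omega,
        qbinom_eq_zero q (by omega), zero_mul]
      rw [eq_comm]
      refine H_eq_zero _ _ (show 0 < i + 1 by omega) (by simp)
  · have hfact := qbinom_fact q (s + i) i (by omega)
    rw [show s + i - i = s from by omega] at hfact
    have hadd : H q q (s + i) = H q q s * H q (q ^ (s+1)) i := by
      rw [H_add]
      congr 2
      rw [pow_succ]
      ring
    rw [show s + 1 + i - 1 = s + i from by omega]
    have hFs := F_ne hroot s
    apply mul_left_cancel₀ hFs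
    rw [hadd] at hfact
    linear_combination hfact

/-- `coef q i k l r` : the scalar in `Ψ⁽ⁱ⁾(a^k ā^l ⊗ b^r) = coef • b^{r+i} ⊗ a^{k-i} ā^{l+i}`. -/
noncomputable def coef (q : ℂ) (i k l r : ℕ) : ℂ :=
  q ^ (l * r) * (∏ j ∈ Finset.range i, qint q (k - j)) * qbinom q (r + i - 1) i

lemma coef_eq_zero {i k : ℕ} (h : k < i) (q : ℂ) (l r : ℕ) : coef q i k l r = 0 := by
  rw [coef, Finset.prod_eq_zero (Finset.mem_range.2 h) (by simp)]
  ring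

include hq hroot in
lemma coef_closed (i k l r : ℕ) :
    coef q i k l r * (H q q i * (q - 1) ^ i)
      = q ^ (l * r) * H q⁻¹ (q ^ k) i * H q (q ^ r) i := by
  rw [← Pk_eq hq i k, ← Qb_eq hq hroot i r, coef]
  ring

include hq hroot in
lemma coef_div (i k l r : ℕ) :
    coef q i k l r
      = q ^ (l * r) * H q⁻¹ (q ^ k) i * H q (q ^ r) i / (H q q i * (q - 1) ^ i) := by
  rw [eq_div_iff (mul_ne_zero (F_ne hroot i) (pow_ne_zero _ (E_ne hroot)))]
  exact coef_closed hq hroot i k l r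

include hq hroot in
lemma qbinom_div (i j : ℕ) :
    qbinom q (i + j) i = H q q (i + j) / (H q q i * H q q j) := by
  rw [eq_div_iff (mul_ne_zero (F_ne hroot i) (F_ne hroot j))]
  have := qbinom_fact q (i + j) i (by omega)
  rw [show i + j - i = j from by omega] at this
  linear_combination this


include hq hroot in
lemma SC1 (m k l k' l' r : ℕ) :
    ∑ i ∈ Finset.range (m+1),
      coef q (m-i) k' l' r * coef q i k l (r+(m-i)) * q ^ ((l+i) * (k'-(m-i)))
    = q ^ (l * k') * coef q m (k+k') (l+l') r := by
  have hE := E_ne hroot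
  have hqi : q * q⁻¹ = 1 := mul_inv_cancel₀ hq
  calc ∑ i ∈ Finset.range (m+1),
      coef q (m-i) k' l' r * coef q i k l (r+(m-i)) * q ^ ((l+i) * (k'-(m-i)))
    = ∑ i ∈ Finset.range (m+1),
        (qbinom q m i * ((q:ℂ)^k') ^ i * (q⁻¹) ^ (i * (m - i)) * H q⁻¹ (q^k) i
          * H q⁻¹ (q^k') (m-i))
        * (q ^ (l * k') * q ^ ((l+l') * r) * H q (q^r) m / (H q q m * (q-1)^m)) := ?_
    _ = q ^ (l * k') * coef q m (k+k') (l+l') r := by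
        rw [← Finset.sum_mul, vand_g q q⁻¹ hqi (q^k) (q^k') m, ← pow_add,
          coef_div hq hroot m (k+k') (l+l') r]
        ring
  refine Finset.sum_congr rfl fun i hi => ?_
  rw [Finset.mem_range] at hi
  obtain ⟨j, rfl⟩ : ∃ j, m = i + j := ⟨m - i, by omega⟩
  rw [show i + j - i = j from by omega]
  rcases le_or_gt j k' with hjk | hjk
  · obtain ⟨e, rfl⟩ : ∃ e, k' = j + e := ⟨k' - j, by omega⟩
    rw [show j + e - j = e from by omega]
    rw [coef_div hq hroot j (j+e) l' r, coef_div hq hroot i k l (r+j),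
      qbinom_div hq hroot i j]
    have h1 : H q ((q:ℂ)^r) (i+j) = H q (q^r) j * H q (q^r * q^j) i := by
      rw [show i + j = j + i from by omega, H_add]
    have h2 : (q:ℂ) ^ (r + j) = q^r * q^j := pow_add q r j
    rw [h1, h2]
    have hFi := F_ne hroot i
    have hFj := F_ne hroot j
    have hFm := F_ne hroot (i+j)
    field_simp
    rw [one_div, inv_pow]
    field_simp
    ring
  · rw [coef_eq_zero hjk, G_eq_zero hq hjk]
    ring

include hq hroot in
lemma SC2 (m k l r s : ℕ) :
    ∑ i ∈ Finset.range (m+1),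
      coef q (m-i) k l r * coef q i (k-(m-i)) (l+(m-i)) s
    = coef q m k l (r+s) := by
  have hE := E_ne hroot
  rcases le_or_gt m k with hmk | hmk
  · calc ∑ i ∈ Finset.range (m+1),
        coef q (m-i) k l r * coef q i (k-(m-i)) (l+(m-i)) s
      = ∑ i ∈ Finset.range (m+1),
          (qbinom q m i * ((q:ℂ)^s) ^ (m-i) * H q (q^s) i * H q (q^r) (m-i))
          * (q ^ (l * (r+s)) * H q⁻¹ (q^k) m / (H q q m * (q-1)^m)) := ?_
      _ = coef q m k l (r+s) := by
          rw [← Finset.sum_mul, vand_h q (q^r) (q^s) m, ← pow_add,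
            coef_div hq hroot m k l (r+s)]
          ring
    refine Finset.sum_congr rfl fun i hi => ?_
    rw [Finset.mem_range] at hi
    obtain ⟨j, rfl⟩ : ∃ j, m = i + j := ⟨m - i, by omega⟩
    rw [show i + j - i = j from by omega]
    rw [coef_div hq hroot j k l r, coef_div hq hroot i (k-j) (l+j) s,
      qbinom_div hq hroot i j]
    have h1 : H q⁻¹ ((q:ℂ)^k) (i+j) = H q⁻¹ (q^k) j * H q⁻¹ (q^k * q⁻¹^j) i := by
      rw [show i + j = j + i from by omega, H_add]
    have h2 : (q:ℂ) ^ (k - j) = q^k * q⁻¹^j := by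
      rw [inv_pow, eq_comm, mul_inv_eq_iff_eq_mul₀ (pow_ne_zero _ hq), ← pow_add]
      congr 1
      omega
    rw [h1, h2]
    have hFi := F_ne hroot i
    have hFj := F_ne hroot j
    have hFm := F_ne hroot (i+j)
    field_simp
    ring
  · rw [coef_eq_zero hmk]
    refine Finset.sum_eq_zero fun i hi => ?_
    rw [Finset.mem_range] at hi
    rcases le_or_gt (m - i) k with h | h
    · rw [coef_eq_zero (show k - (m-i) < i from by omega)]
      ring
    · rw [coef_eq_zero h]
      ring

end Closed
end QPaux




namespace QPaux

lemma muq_single (q : ℂ) (k l k' l' : ℕ) :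
    muq q (Finsupp.single (k,l) 1) (Finsupp.single (k',l') 1)
      = q ^ (l * k') • (Finsupp.single (k+k', l+l') (1:ℂ) : Aq) := by
  rw [muq, Finsupp.lift_apply, Finsupp.sum_single_index (by simp), one_smul,
    Finsupp.lift_apply, Finsupp.sum_single_index (by simp), one_smul]

lemma psi_single (q : ℂ) (i k l r : ℕ) :
    psiqFam q i ((Finsupp.single (k,l) 1 : Aq) ⊗ₜ[ℂ] (AddMonoidAlgebra.single r 1 : Bpoly))
      = coef q i k l r •
          ((AddMonoidAlgebra.single (r+i) (1:ℂ) : Bpoly) ⊗ₜ[ℂ] (Finsupp.single (k-i, l+i) (1:ℂ) : Aq)) := by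
  rcases i with _ | i
  · rw [psiqFam, psiq0, TensorProduct.lift.tmul, Finsupp.lift_apply,
      Finsupp.sum_single_index (by simp), one_smul]
    rw [LinearMap.comp_apply, LinearEquiv.coe_coe, AddMonoidAlgebra.coeffLinearEquiv_apply,
      AddMonoidAlgebra.coeff_single, Finsupp.lift_apply, Finsupp.sum_single_index (by simp)]
    rw [one_smul, coef]
    norm_num
  · rw [psiqFam, TensorProduct.lift.tmul, Finsupp.lift_apply,
      Finsupp.sum_single_index (by simp), one_smul]
    rw [LinearMap.comp_apply, LinearEquiv.coe_coe, AddMonoidAlgebra.coeffLinearEquiv_apply,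
      AddMonoidAlgebra.coeff_single, Finsupp.lift_apply, Finsupp.sum_single_index (by simp)]
    rw [one_smul, coef, show r + (i+1) - 1 = r + i from by omega]

lemma twL_single (q : ℂ) (i k l s k₂ l₂ : ℕ) :
    twL (TensorProduct.lift (muq q)) (psiqFam q i)
      ((Finsupp.single (k,l) 1 : Aq) ⊗ₜ[ℂ]
        ((AddMonoidAlgebra.single s 1 : Bpoly) ⊗ₜ[ℂ] (Finsupp.single (k₂,l₂) 1 : Aq)))
    = (coef q i k l s * q ^ ((l+i) * k₂)) •
        ((AddMonoidAlgebra.single (s+i) 1 : Bpoly) ⊗ₜ[ℂ] (Finsupp.single (k-i+k₂, l+i+l₂) (1:ℂ) : Aq)) := by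
  rw [twL]
  simp only [LinearMap.coe_comp, Function.comp_apply, LinearEquiv.coe_coe,
    TensorProduct.assoc_symm_tmul, LinearMap.rTensor_tmul, psi_single]
  simp only [TensorProduct.smul_tmul', map_smul, TensorProduct.assoc_tmul,
    LinearMap.lTensor_tmul, TensorProduct.lift.tmul, muq_single, TensorProduct.tmul_smul,
    smul_smul, mul_comm]

lemma twR_single (q : ℂ) (i s k l v : ℕ) :
    twR (LinearMap.mul' ℂ Bpoly) (psiqFam q i)
      (((AddMonoidAlgebra.single s 1 : Bpoly) ⊗ₜ[ℂ] (Finsupp.single (k,l) 1 : Aq)) ⊗ₜ[ℂ]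
        (AddMonoidAlgebra.single v 1 : Bpoly))
    = coef q i k l v •
        ((AddMonoidAlgebra.single (s+(v+i)) 1 : Bpoly) ⊗ₜ[ℂ] (Finsupp.single (k-i, l+i) (1:ℂ) : Aq)) := by
  rw [twR]
  simp only [LinearMap.coe_comp, Function.comp_apply, LinearEquiv.coe_coe,
    TensorProduct.assoc_tmul, LinearMap.lTensor_tmul, psi_single]
  rw [TensorProduct.tmul_smul, LinearEquiv.map_smul, LinearMap.map_smul,
    TensorProduct.assoc_symm_tmul, LinearMap.rTensor_tmul, LinearMap.mul'_apply]
  congr 2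
  have : (AddMonoidAlgebra.single s (1:ℂ)) * AddMonoidAlgebra.single (v+i) (1:ℂ)
      = AddMonoidAlgebra.single (s+(v+i)) ((1:ℂ)*1) := AddMonoidAlgebra.single_mul_single _ _ _ _
  rw [one_mul] at this
  exact this
lemma main1_single {q : ℂ} (hq : q ≠ 0) (hroot : ∀ m : ℕ, 1 ≤ m → q ^ m ≠ 1)
    (m k l k' l' r : ℕ) :
    psiqFam q m (muq q (Finsupp.single (k,l) 1) (Finsupp.single (k',l') 1) ⊗ₜ[ℂ]
        (AddMonoidAlgebra.single r 1 : Bpoly))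
      = ∑ i ∈ Finset.range (m + 1),
          twL (TensorProduct.lift (muq q)) (psiqFam q i)
            ((Finsupp.single (k,l) 1 : Aq) ⊗ₜ[ℂ]
              psiqFam q (m - i) ((Finsupp.single (k',l') 1 : Aq) ⊗ₜ[ℂ]
                (AddMonoidAlgebra.single r 1 : Bpoly))) := by
  rw [muq_single, ← TensorProduct.smul_tmul', LinearMap.map_smul, psi_single, smul_smul]
  have key : ∀ i ∈ Finset.range (m+1),
      twL (TensorProduct.lift (muq q)) (psiqFam q i)
        ((Finsupp.single (k,l) 1 : Aq) ⊗ₜ[ℂ]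
          psiqFam q (m - i) ((Finsupp.single (k',l') 1 : Aq) ⊗ₜ[ℂ]
            (AddMonoidAlgebra.single r 1 : Bpoly)))
      = (coef q (m-i) k' l' r * coef q i k l (r+(m-i)) * q ^ ((l+i) * (k'-(m-i)))) •
          ((AddMonoidAlgebra.single (r+m) 1 : Bpoly) ⊗ₜ[ℂ]
            (Finsupp.single (k+k'-m, l+l'+m) (1:ℂ) : Aq)) := by
    intro i hi
    rw [Finset.mem_range] at hi
    rw [psi_single, TensorProduct.tmul_smul, LinearMap.map_smul, twL_single, smul_smul,
      ← mul_assoc]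
    rcases le_or_gt i k with hik | hik
    · rcases le_or_gt (m - i) k' with hjk | hjk
      · rw [show r + (m-i) + i = r + m from by omega,
          show k - i + (k' - (m-i)) = k + k' - m from by omega,
          show l + i + (l' + (m-i)) = l + l' + m from by omega]
      · rw [coef_eq_zero hjk]
        simp
    · rw [coef_eq_zero hik]
      simp
  rw [Finset.sum_congr rfl key, ← Finset.sum_smul, SC1 hq hroot m k l k' l' r]

lemma main2_single {q : ℂ} (hq : q ≠ 0) (hroot : ∀ m : ℕ, 1 ≤ m → q ^ m ≠ 1)
    (m k l r s : ℕ) :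
    psiqFam q m ((Finsupp.single (k,l) 1 : Aq) ⊗ₜ[ℂ] (AddMonoidAlgebra.single (r+s) 1 : Bpoly))
      = ∑ i ∈ Finset.range (m + 1),
          twR (LinearMap.mul' ℂ Bpoly) (psiqFam q i)
            (psiqFam q (m - i) ((Finsupp.single (k,l) 1 : Aq) ⊗ₜ[ℂ]
                (AddMonoidAlgebra.single r 1 : Bpoly)) ⊗ₜ[ℂ] (AddMonoidAlgebra.single s 1 : Bpoly)) := by
  rw [psi_single]
  have key : ∀ i ∈ Finset.range (m+1),
      twR (LinearMap.mul' ℂ Bpoly) (psiqFam q i)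
        (psiqFam q (m - i) ((Finsupp.single (k,l) 1 : Aq) ⊗ₜ[ℂ]
            (AddMonoidAlgebra.single r 1 : Bpoly)) ⊗ₜ[ℂ] (AddMonoidAlgebra.single s 1 : Bpoly))
      = (coef q (m-i) k l r * coef q i (k-(m-i)) (l+(m-i)) s) •
          ((AddMonoidAlgebra.single (r+s+m) 1 : Bpoly) ⊗ₜ[ℂ]
            (Finsupp.single (k-m, l+m) (1:ℂ) : Aq)) := by
    intro i hi
    rw [Finset.mem_range] at hi
    rw [psi_single, ← TensorProduct.smul_tmul']
    rw [LinearMap.map_smul, twR_single, smul_smul]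
    rw [show r + (m-i) + (s+i) = r + s + m from by omega,
      show k - (m-i) - i = k - m from by omega,
      show l + (m-i) + i = l + m from by omega]
  rw [Finset.sum_congr rfl key, ← Finset.sum_smul, SC2 hq hroot m k l r s]

end QPaux


lemma main1 {q : ℂ} (hq : q ≠ 0) (hroot : ∀ m : ℕ, 1 ≤ m → q ^ m ≠ 1) (m : ℕ)
    (x y : Aq) (u : Bpoly) :
    psiqFam q m (muq q x y ⊗ₜ[ℂ] u)
      = ∑ i ∈ Finset.range (m + 1),
          twL (TensorProduct.lift (muq q)) (psiqFam q i)
            (x ⊗ₜ[ℂ] psiqFam q (m - i) (y ⊗ₜ[ℂ] u)) := by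
  have hmap :
      (psiqFam q m ∘ₗ LinearMap.rTensor Bpoly (TensorProduct.lift (muq q))
          ∘ₗ (TensorProduct.assoc ℂ Aq Aq Bpoly).symm.toLinearMap)
        = ∑ i ∈ Finset.range (m+1),
            (twL (TensorProduct.lift (muq q)) (psiqFam q i)
              ∘ₗ LinearMap.lTensor Aq (psiqFam q (m-i))) := by
    ext p p' r
    obtain ⟨k, l⟩ := p
    obtain ⟨k', l'⟩ := p'
    simp only [TensorProduct.AlgebraTensorModule.curry_apply, TensorProduct.curry_apply,
      LinearMap.coe_comp, Function.comp_apply, Finsupp.lsingle_apply,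
      LinearMap.coe_restrictScalars, LinearEquiv.coe_coe, TensorProduct.assoc_symm_tmul,
      LinearMap.rTensor_tmul, TensorProduct.lift.tmul, LinearMap.sum_apply,
      LinearMap.lTensor_tmul]
    exact QPaux.main1_single hq hroot m k l k' l' r
  have := LinearMap.congr_fun hmap (x ⊗ₜ[ℂ] (y ⊗ₜ[ℂ] u))
  simp only [LinearMap.coe_comp, Function.comp_apply, LinearEquiv.coe_coe,
    TensorProduct.assoc_symm_tmul, LinearMap.rTensor_tmul, TensorProduct.lift.tmul,
    LinearMap.sum_apply, LinearMap.lTensor_tmul] at this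
  exact this


lemma main2 {q : ℂ} (hq : q ≠ 0) (hroot : ∀ m : ℕ, 1 ≤ m → q ^ m ≠ 1) (m : ℕ)
    (x : Aq) (u v : Bpoly) :
    psiqFam q m (x ⊗ₜ[ℂ] (u * v))
      = ∑ i ∈ Finset.range (m + 1),
          twR (LinearMap.mul' ℂ Bpoly) (psiqFam q i)
            (psiqFam q (m - i) (x ⊗ₜ[ℂ] u) ⊗ₜ[ℂ] v) := by
  have hmap :
      (psiqFam q m ∘ₗ LinearMap.lTensor Aq (LinearMap.mul' ℂ Bpoly))
        = ∑ i ∈ Finset.range (m+1),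
            (twR (LinearMap.mul' ℂ Bpoly) (psiqFam q i)
              ∘ₗ LinearMap.rTensor Bpoly (psiqFam q (m-i))
              ∘ₗ (TensorProduct.assoc ℂ Aq Bpoly Bpoly).symm.toLinearMap) := by
    ext p r s
    obtain ⟨k, l⟩ := p
    simp only [TensorProduct.AlgebraTensorModule.curry_apply, TensorProduct.curry_apply,
      LinearMap.coe_comp, Function.comp_apply, Finsupp.lsingle_apply,
      LinearMap.coe_restrictScalars, LinearEquiv.coe_coe, TensorProduct.assoc_symm_tmul,
      LinearMap.rTensor_tmul, LinearMap.lTensor_tmul, LinearMap.sum_apply,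
      LinearMap.mul'_apply]
    have h : (AddMonoidAlgebra.lsingle (R := ℂ) r 1 : Bpoly) * AddMonoidAlgebra.lsingle (R := ℂ) s 1
        = AddMonoidAlgebra.single (r+s) ((1:ℂ)*1) := AddMonoidAlgebra.single_mul_single _ _ _ _
    rw [one_mul] at h
    rw [h]
    exact QPaux.main2_single hq hroot m k l r s
  have := LinearMap.congr_fun hmap (x ⊗ₜ[ℂ] (u ⊗ₜ[ℂ] v))
  simp only [LinearMap.coe_comp, Function.comp_apply, LinearEquiv.coe_coe,
    TensorProduct.assoc_symm_tmul, LinearMap.rTensor_tmul, LinearMap.lTensor_tmul,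
    LinearMap.sum_apply, LinearMap.mul'_apply] at this
  exact this

/-- Example 3.4, deformation to all orders. -/
theorem quantum_plane_all_orders (q : ℂ) (hq : q ≠ 0)
    (hqroot : ∀ m : ℕ, 1 ≤ m → q ^ m ≠ 1) :
    letI μA : Aq ⊗[ℂ] Aq →ₗ[ℂ] Aq := TensorProduct.lift (muq q)
    letI μB := LinearMap.mul' ℂ Bpoly
    ∀ m : ℕ, 1 ≤ m →
      (∀ (x y : Aq) (u : Bpoly),
        psiqFam q m (muq q x y ⊗ₜ[ℂ] u)
          = ∑ i ∈ Finset.range (m + 1),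
              twL μA (psiqFam q i) (x ⊗ₜ[ℂ] psiqFam q (m - i) (y ⊗ₜ[ℂ] u))) ∧
      (∀ (x : Aq) (u v : Bpoly),
        psiqFam q m (x ⊗ₜ[ℂ] (u * v))
          = ∑ i ∈ Finset.range (m + 1),
              twR μB (psiqFam q i) (psiqFam q (m - i) (x ⊗ₜ[ℂ] u) ⊗ₜ[ℂ] v)) := by
  intro m _
  exact ⟨fun x y u => main1 hq hqroot m x y u, fun x u v => main2 hq hqroot m x u v⟩
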